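/- arXiv:1911.01169 — 4 statements merged into one kernel-verified Lean document; each statement's English description precedes it below -/
import Mathlib

section
/- Let α ∈ (0,1) and let I be an interval of integers. Suppose I₁, …, I_s ⊆ I are pairwise disjoint intervals with Σ_{h=1}^s |I_h| ≥ α|I|. Then there exists a set G ⊆ [s] such that Σ_{h∈G} |I_h| ≥ (α/4)|I|, and for every interval J ⊆ I that contains some I_h with h ∈ G, we have Σ_{h∈[s] : I_h ⊆ J} |I_h| ≥ (α/4)|J|. -/
/-- A set of consecutive integers. -/
def IsIntervalZ (S : Finset ℤ) : Prop := ∃ a b : ℤ, S = Finset.Icc a b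

theorem stmt_0 (α : ℝ) (hα0 : 0 < α) (hα1 : α < 1)
    (I : Finset ℤ) (hI : IsIntervalZ I)
    (s : ℕ) (Is : Fin s → Finset ℤ)
    (hint : ∀ h, IsIntervalZ (Is h))
    (hsub : ∀ h, Is h ⊆ I)
    (hdisj : ∀ h h' : Fin s, h ≠ h' → Disjoint (Is h) (Is h'))
    (hsum : α * I.card ≤ ∑ h, ((Is h).card : ℝ)) :
    ∃ G : Finset (Fin s),
      (α / 4) * I.card ≤ ∑ h ∈ G, ((Is h).card : ℝ) ∧
      ∀ J : Finset ℤ, IsIntervalZ J → J ⊆ I → (∃ h ∈ G, Is h ⊆ J) →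
        (α / 4) * J.card ≤
          ∑ h ∈ Finset.univ.filter (fun h => Is h ⊆ J), ((Is h).card : ℝ) := by
  classical
  obtain ⟨AI, BI, hIeq⟩ := hI
  have hβpos : (0:ℝ) < α / 4 := by linarith
  choose u v huv using hint
  set Bad : Fin s → Prop := fun h => ∃ J : Finset ℤ, IsIntervalZ J ∧ J ⊆ I ∧ Is h ⊆ J ∧
      (∑ k ∈ Finset.univ.filter (fun k => Is k ⊆ J), ((Is k).card : ℝ)) < (α / 4) * J.card
    with hBadDef
  refine ⟨Finset.univ.filter (fun h => ¬ Bad h), ?_, ?_⟩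
  · -- main quantitative goal
    by_cases hIne : I.Nonempty
    case neg =>
      have hIe : I = ∅ := Finset.not_nonempty_iff_eq_empty.mp hIne
      rw [hIe]
      simp only [Finset.card_empty, Nat.cast_zero, mul_zero]
      exact Finset.sum_nonneg fun i _ => by positivity
    case pos =>
    have hAB : AI ≤ BI := by
      obtain ⟨x, hx⟩ := hIne
      rw [hIeq, Finset.mem_Icc] at hx
      omega
    -- choose witnesses for bad indices
    have hWex : ∀ h : Fin s, ∃ ww : ℤ × ℤ, Bad h →
        (Finset.Icc ww.1 ww.2 ⊆ I ∧ Is h ⊆ Finset.Icc ww.1 ww.2 ∧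
          (∑ k ∈ Finset.univ.filter (fun k => Is k ⊆ Finset.Icc ww.1 ww.2), ((Is k).card : ℝ))
            < (α / 4) * (Finset.Icc ww.1 ww.2).card) := by
      intro h
      by_cases hb : Bad h
      · obtain ⟨J, ⟨pj, qj, rfl⟩, h1, h2, h3⟩ := hb
        exact ⟨(pj, qj), fun _ => ⟨h1, h2, h3⟩⟩
      · exact ⟨(0, 0), fun hb' => absurd hb' hb⟩
    choose w hw using hWex
    have hfct : ∀ h, Bad h → u h ≤ v h → (w h).1 ≤ u h ∧ v h ≤ (w h).2 := by
      intro h hb huvh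
      obtain ⟨_, h2, _⟩ := hw h hb
      have hu : u h ∈ Finset.Icc (w h).1 (w h).2 :=
        h2 (by rw [huv h]; exact Finset.mem_Icc.mpr ⟨le_refl _, huvh⟩)
      have hv : v h ∈ Finset.Icc (w h).1 (w h).2 :=
        h2 (by rw [huv h]; exact Finset.mem_Icc.mpr ⟨huvh, le_refl _⟩)
      exact ⟨(Finset.mem_Icc.mp hu).1, (Finset.mem_Icc.mp hv).2⟩
    have hbnd : ∀ h, Bad h → u h ≤ v h → AI ≤ (w h).1 ∧ (w h).2 ≤ BI := by
      intro h hb huvh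
      obtain ⟨h1, _, _⟩ := hw h hb
      have hpq' : (w h).1 ≤ (w h).2 :=
        le_trans (hfct h hb huvh).1 (le_trans huvh (hfct h hb huvh).2)
      have e1 : (w h).1 ∈ I := h1 (Finset.mem_Icc.mpr ⟨le_refl _, hpq'⟩)
      have e2 : (w h).2 ∈ I := h1 (Finset.mem_Icc.mpr ⟨hpq', le_refl _⟩)
      rw [hIeq, Finset.mem_Icc] at e1 e2
      exact ⟨e1.1, e2.2⟩
    have huvI : ∀ h, u h ≤ v h → AI ≤ u h ∧ v h ≤ BI := by
      intro h huvh
      have e1 : u h ∈ I := hsub h (by rw [huv h]; exact Finset.mem_Icc.mpr ⟨le_refl _, huvh⟩)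
      have e2 : v h ∈ I := hsub h (by rw [huv h]; exact Finset.mem_Icc.mpr ⟨huvh, le_refl _⟩)
      rw [hIeq, Finset.mem_Icc] at e1 e2
      exact ⟨e1.1, e2.2⟩
    -- the key recursive covering bound
    have REC : ∀ n : ℕ, ∀ x y z : ℤ, x ≤ y → y ≤ z → z ≤ BI →
        (∀ h, Bad h → u h ≤ v h → z < v h → y ≤ u h) →
        (∀ h, Bad h → u h ≤ v h → z < v h → x < (w h).1) →
        (Finset.univ.filter (fun h => Bad h ∧ u h ≤ v h ∧ z < v h)).card ≤ n →
        ∑ h ∈ Finset.univ.filter (fun h => Bad h ∧ u h ≤ v h ∧ z < v h), ((Is h).card : ℝ)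
          ≤ (α / 4) * (((BI - x) + (BI - y) + (BI - z) : ℤ) : ℝ) := by
      intro n
      induction n with
      | zero =>
        intro x y z hxy hyz hzB _ _ hcard
        rw [Finset.card_eq_zero.mp (Nat.le_zero.mp hcard), Finset.sum_empty]
        have h0 : (0 : ℤ) ≤ (BI - x) + (BI - y) + (BI - z) := by omega
        exact mul_nonneg hβpos.le (by exact_mod_cast h0)
      | succ n ih =>
        intro x y z hxy hyz hzB H1 H2 hcard
        by_cases hSne : (Finset.univ.filter (fun h => Bad h ∧ u h ≤ v h ∧ z < v h)).Nonempty
        case neg =>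
          rw [Finset.not_nonempty_iff_eq_empty.mp hSne, Finset.sum_empty]
          have h0 : (0 : ℤ) ≤ (BI - x) + (BI - y) + (BI - z) := by omega
          exact mul_nonneg hβpos.le (by exact_mod_cast h0)
        case pos =>
        obtain ⟨b0, hb0S, hb0min⟩ := Finset.exists_min_image _ u hSne
        obtain ⟨hb0Bad, hb0uv, hb0z⟩ := (Finset.mem_filter.mp hb0S).2
        obtain ⟨hs1, hhsC, hhsmax⟩ := Finset.exists_max_image
          ((Finset.univ.filter (fun h => Bad h ∧ u h ≤ v h ∧ z < v h)).filter
            (fun h => (w h).1 ≤ u b0)) (fun h => (w h).2)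
          ⟨b0, Finset.mem_filter.mpr ⟨hb0S, (hfct b0 hb0Bad hb0uv).1⟩⟩
        have hhsS := (Finset.mem_filter.mp hhsC).1
        obtain ⟨hhsBad, hhsuv, hhsz⟩ := (Finset.mem_filter.mp hhsS).2
        have hhsA : (w hs1).1 ≤ u b0 := (Finset.mem_filter.mp hhsC).2
        obtain ⟨hLI, hLsub, hLlight⟩ := hw hs1 hhsBad
        have hvqb0 : v b0 ≤ (w b0).2 := (hfct b0 hb0Bad hb0uv).2
        have hqb0f : (w b0).2 ≤ (w hs1).2 :=
          hhsmax b0 (Finset.mem_filter.mpr ⟨hb0S, (hfct b0 hb0Bad hb0uv).1⟩)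
        have hzf : z < (w hs1).2 := lt_of_lt_of_le hb0z (le_trans hvqb0 hqb0f)
        have hfB : (w hs1).2 ≤ BI := (hbnd hs1 hhsBad hhsuv).2
        have hxp : x < (w hs1).1 := H2 hs1 hhsBad hhsuv hhsz
        -- the sum of bads finished in this stage is at most the mass of the witness of hs1
        have hT : ∑ h ∈ (Finset.univ.filter (fun h => Bad h ∧ u h ≤ v h ∧ z < v h)).filter
              (fun h => v h ≤ (w hs1).2), ((Is h).card : ℝ)
            ≤ ∑ k ∈ Finset.univ.filter (fun k => Is k ⊆ Finset.Icc (w hs1).1 (w hs1).2),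
                ((Is k).card : ℝ) := by
          apply Finset.sum_le_sum_of_subset_of_nonneg
          · intro h hh
            obtain ⟨hhS, hhvf⟩ := Finset.mem_filter.mp hh
            obtain ⟨hbh, huvh, hzh⟩ := (Finset.mem_filter.mp hhS).2
            refine Finset.mem_filter.mpr ⟨Finset.mem_univ _, ?_⟩
            rw [huv h]
            exact Finset.Icc_subset_Icc (le_trans hhsA (hb0min h hhS)) hhvf
          · intro i _ _
            positivity
        have hcardIcc : ((Finset.Icc (w hs1).1 (w hs1).2).card : ℝ) ≤ (((w hs1).2 - x : ℤ) : ℝ) := by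
          have hfc := hfct hs1 hhsBad hhsuv
          have hc : ((Finset.Icc (w hs1).1 (w hs1).2).card : ℤ) = (w hs1).2 + 1 - (w hs1).1 := by
            rw [Int.card_Icc]
            exact Int.toNat_of_nonneg (by omega)
          have : ((Finset.Icc (w hs1).1 (w hs1).2).card : ℤ) ≤ (w hs1).2 - x := by
            rw [hc]; omega
          exact_mod_cast this
        have hTB : ∑ h ∈ (Finset.univ.filter (fun h => Bad h ∧ u h ≤ v h ∧ z < v h)).filter
              (fun h => v h ≤ (w hs1).2), ((Is h).card : ℝ)
            ≤ (α / 4) * (((w hs1).2 - x : ℤ) : ℝ) :=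
          le_trans hT (le_trans hLlight.le (mul_le_mul_of_nonneg_left hcardIcc hβpos.le))
        -- the remaining set
        have hrest_eq : (Finset.univ.filter (fun h => Bad h ∧ u h ≤ v h ∧ z < v h)).filter
              (fun h => ¬ v h ≤ (w hs1).2)
            = Finset.univ.filter (fun h => Bad h ∧ u h ≤ v h ∧ (w hs1).2 < v h) := by
          ext h
          simp only [Finset.mem_filter, Finset.mem_univ, true_and, not_le]
          constructor
          · rintro ⟨⟨hb, huvh, _⟩, hlt⟩; exact ⟨hb, huvh, hlt⟩
          · rintro ⟨hb, huvh, hlt⟩; exact ⟨⟨hb, huvh, lt_trans hzf hlt⟩, hlt⟩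
        have hcard' : (Finset.univ.filter (fun h => Bad h ∧ u h ≤ v h ∧ (w hs1).2 < v h)).card ≤ n := by
          rw [← hrest_eq]
          have hsub1 : (Finset.univ.filter (fun h => Bad h ∧ u h ≤ v h ∧ z < v h)).filter
                (fun h => ¬ v h ≤ (w hs1).2)
              ⊆ (Finset.univ.filter (fun h => Bad h ∧ u h ≤ v h ∧ z < v h)).erase b0 := by
            intro h hh
            obtain ⟨hhS, hnv⟩ := Finset.mem_filter.mp hh
            refine Finset.mem_erase.mpr ⟨?_, hhS⟩
            rintro rfl
            exact hnv (le_trans hvqb0 hqb0f)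
          have := Finset.card_le_card hsub1
          rw [Finset.card_erase_of_mem hb0S] at this
          omega
        -- new invariants
        have newH1 : ∀ h, Bad h → u h ≤ v h → (w hs1).2 < v h → z ≤ u h := by
          intro h hbh huvh hfv
          by_contra hcon
          push_neg at hcon
          have hhS : h ∈ Finset.univ.filter (fun h => Bad h ∧ u h ≤ v h ∧ z < v h) :=
            Finset.mem_filter.mpr ⟨Finset.mem_univ _, hbh, huvh, lt_trans hzf hfv⟩
          by_cases hhb0 : h = b0
          · subst hhb0
            have h1 : (w h).1 ≤ u h := (hfct h hbh huvh).1
            have hhC : h ∈ (Finset.univ.filter (fun h => Bad h ∧ u h ≤ v h ∧ z < v h)).filter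
                (fun h' => (w h').1 ≤ u h) := Finset.mem_filter.mpr ⟨hhS, h1⟩
            have h2 : (w h).2 ≤ (w hs1).2 := hhsmax h hhC
            have h3 : v h ≤ (w h).2 := (hfct h hbh huvh).2
            omega
          · have hz1 : z ∈ Is h := by
              rw [huv h]
              refine Finset.mem_Icc.mpr ⟨hcon.le, ?_⟩
              have : z < v h := lt_trans hzf hfv
              omega
            have hz2 : z ∈ Is b0 := by
              rw [huv b0]
              refine Finset.mem_Icc.mpr ⟨?_, ?_⟩
              · have := hb0min h hhS; omega
              · omega
            exact absurd hz2 (Finset.disjoint_left.mp (hdisj h b0 hhb0) hz1)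
        have newH2 : ∀ h, Bad h → u h ≤ v h → (w hs1).2 < v h → y < (w h).1 := by
          intro h hbh huvh hfv
          have hhS : h ∈ Finset.univ.filter (fun h => Bad h ∧ u h ≤ v h ∧ z < v h) :=
            Finset.mem_filter.mpr ⟨Finset.mem_univ _, hbh, huvh, lt_trans hzf hfv⟩
          by_contra hcon
          push_neg at hcon
          have hyA : y ≤ u b0 := H1 b0 hb0Bad hb0uv hb0z
          have hhC : h ∈ (Finset.univ.filter (fun h => Bad h ∧ u h ≤ v h ∧ z < v h)).filter
              (fun h' => (w h').1 ≤ u b0) := Finset.mem_filter.mpr ⟨hhS, by omega⟩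
          have h2 : (w h).2 ≤ (w hs1).2 := hhsmax h hhC
          have h3 : v h ≤ (w h).2 := (hfct h hbh huvh).2
          omega
        have hIH := ih y z ((w hs1).2) hyz hzf.le hfB newH1 newH2 hcard'
        calc ∑ h ∈ Finset.univ.filter (fun h => Bad h ∧ u h ≤ v h ∧ z < v h), ((Is h).card : ℝ)
            = (∑ h ∈ (Finset.univ.filter (fun h => Bad h ∧ u h ≤ v h ∧ z < v h)).filter
                  (fun h => v h ≤ (w hs1).2), ((Is h).card : ℝ))
              + ∑ h ∈ (Finset.univ.filter (fun h => Bad h ∧ u h ≤ v h ∧ z < v h)).filter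
                  (fun h => ¬ v h ≤ (w hs1).2), ((Is h).card : ℝ) :=
              (Finset.sum_filter_add_sum_filter_not _ _ _).symm
          _ ≤ (α / 4) * (((w hs1).2 - x : ℤ) : ℝ)
              + (α / 4) * (((BI - y) + (BI - z) + (BI - (w hs1).2) : ℤ) : ℝ) := by
              refine add_le_add hTB ?_
              rw [hrest_eq]
              exact hIH
          _ = (α / 4) * (((BI - x) + (BI - y) + (BI - z) : ℤ) : ℝ) := by
              push_cast
              ring
    -- apply REC with the initial frontier
    have hREC := REC s (AI - 1) (AI - 1) (AI - 1) le_rfl le_rfl (by omega)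
        (fun h hb huvh _ => by have := (huvI h huvh).1; omega)
        (fun h hb huvh _ => by have := (hbnd h hb huvh).1; omega)
        (le_trans (Finset.card_filter_le _ _) (by simp))
    have hset2 : Finset.univ.filter (fun h => Bad h ∧ u h ≤ v h ∧ (AI - 1 : ℤ) < v h)
        = Finset.univ.filter (fun h => Bad h ∧ u h ≤ v h) := by
      ext h
      simp only [Finset.mem_filter, Finset.mem_univ, true_and]
      constructor
      · rintro ⟨hb, huvh, _⟩; exact ⟨hb, huvh⟩
      · rintro ⟨hb, huvh⟩
        exact ⟨hb, huvh, by have := (huvI h huvh).1; omega⟩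
    rw [hset2] at hREC
    have hzero : ∑ h ∈ Finset.univ.filter (fun h => Bad h), ((Is h).card : ℝ)
        = ∑ h ∈ Finset.univ.filter (fun h => Bad h ∧ u h ≤ v h), ((Is h).card : ℝ) := by
      symm
      apply Finset.sum_subset
      · intro h hh
        simp only [Finset.mem_filter, Finset.mem_univ, true_and] at hh ⊢
        exact hh.1
      · intro h hh hnh
        simp only [Finset.mem_filter, Finset.mem_univ, true_and] at hh hnh
        have huvn : ¬ u h ≤ v h := fun hc => hnh ⟨hh, hc⟩
        rw [huv h, Finset.Icc_eq_empty huvn]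
        simp
    have h3 : ∑ h ∈ Finset.univ.filter (fun h => Bad h), ((Is h).card : ℝ)
        ≤ (α / 4) * (3 * ((BI - AI + 1 : ℤ) : ℝ)) := by
      rw [hzero]
      refine le_trans hREC (le_of_eq ?_)
      push_cast
      ring
    have htot := Finset.sum_filter_add_sum_filter_not Finset.univ (fun h => Bad h)
        (fun h => ((Is h).card : ℝ))
    have hIc' : (I.card : ℤ) = BI - AI + 1 := by
      rw [hIeq, Int.card_Icc]
      omega
    have hIcard : (I.card : ℝ) = ((BI - AI + 1 : ℤ) : ℝ) := by exact_mod_cast hIc'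
    have e2 : (α / 4) * (3 * ((BI - AI + 1 : ℤ) : ℝ)) = (3/4) * (α * ((BI - AI + 1 : ℤ) : ℝ)) := by
      ring
    have e3 : (α / 4) * ((BI - AI + 1 : ℤ) : ℝ) = (1/4) * (α * ((BI - AI + 1 : ℤ) : ℝ)) := by
      ring
    rw [hIcard] at hsum ⊢
    rw [e3]
    rw [e2] at h3
    linarith [h3, htot, hsum]
  · rintro J hJint hJI ⟨h, hhG, hhJ⟩
    by_contra hcon
    push_neg at hcon
    have hb : Bad h := ⟨J, hJint, hJI, hhJ, hcon⟩
    exact (Finset.mem_filter.mp hhG).2 hb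
end

section
/- Let f : Fin n → ℝ and k ≥ 2. If f is ε-far from being free of length-k increasing subsequences (i.e., every function g : Fin n → ℝ that contains no increasing subsequence of length k differs from f on at least εn inputs), then f contains a collection of at least εn/k pairwise-disjoint increasing subsequences of length k. -/
theorem stmt_2 (n k : ℕ) (hk : 2 ≤ k) (ε : ℝ) (hε : 0 < ε)
    (f : Fin n → ℝ)
    (hfar : ∀ g : Fin n → ℝ,
      (¬ ∃ s : Fin k → Fin n, StrictMono s ∧ StrictMono (g ∘ s)) →
      ε * n ≤ ((Finset.univ.filter (fun i => f i ≠ g i)).card : ℝ)) :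
    ∃ T : Finset (Fin k → Fin n),
      (∀ s ∈ T, StrictMono s ∧ StrictMono (f ∘ s)) ∧
      (∀ s ∈ T, ∀ t ∈ T, s ≠ t → ∀ a b, s a ≠ t b) ∧
      ε * n / k ≤ T.card := by
  classical
  have hkR : (0:ℝ) < k := by exact_mod_cast (by omega : 0 < k)
  rcases Nat.eq_zero_or_pos n with h0 | hn
  · refine ⟨∅, by simp, by simp, ?_⟩
    subst h0; simp
  have : Nonempty (Fin n) := ⟨⟨0, hn⟩⟩
  set P : Finset (Fin k → Fin n) → Prop := fun T =>
    (∀ s ∈ T, StrictMono s ∧ StrictMono (f ∘ s)) ∧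
    (∀ s ∈ T, ∀ t ∈ T, s ≠ t → ∀ a b, s a ≠ t b) with hPdef
  obtain ⟨T, hTmem, hTmax⟩ :=
    Finset.exists_max_image (Finset.univ.filter P) Finset.card
      ⟨∅, by simp [hPdef]⟩
  have hTP : P T := (Finset.mem_filter.mp hTmem).2
  set C : Finset (Fin n) := T.biUnion (fun s => Finset.image s Finset.univ) with hCdef
  have hC : ∀ s ∈ T, ∀ a, s a ∈ C := by
    intro s hs a
    exact Finset.mem_biUnion.mpr ⟨s, hs, Finset.mem_image.mpr ⟨a, Finset.mem_univ a, rfl⟩⟩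
  -- maximality: no increasing k-subseq avoiding C
  have hnoext : ∀ s : Fin k → Fin n, StrictMono s → StrictMono (f ∘ s) → ∃ a, s a ∈ C := by
    intro s hs hfs
    by_contra h
    push_neg at h
    have hsT : s ∉ T := fun hsT => h ⟨0, by omega⟩ (hC s hsT _)
    have hPT' : P (insert s T) := by
      constructor
      · intro t ht
        rcases Finset.mem_insert.mp ht with rfl | ht
        · exact ⟨hs, hfs⟩
        · exact hTP.1 t ht
      · intro t ht u hu hne a b
        rcases Finset.mem_insert.mp ht with hts | ht'
        · rcases Finset.mem_insert.mp hu with hus | hu'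
          · exact absurd (hts.trans hus.symm) hne
          · subst hts
            exact fun e => h a (e.symm ▸ hC u hu' b)
        · rcases Finset.mem_insert.mp hu with hus | hu'
          · subst hus
            exact fun e => h b (e ▸ hC t ht' a)
          · exact hTP.2 t ht' u hu' hne a b
    have := hTmax (insert s T) (Finset.mem_filter.mpr ⟨Finset.mem_univ _, hPT'⟩)
    rw [Finset.card_insert_of_notMem hsT] at this
    omega
  -- the modified function g
  set M : ℝ := (Finset.univ.image f).max' (by simp) + 1 with hMdef
  have hMgt : ∀ i, f i < M := by
    intro i
    have : f i ≤ (Finset.univ.image f).max' (by simp) :=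
      Finset.le_max' _ _ (Finset.mem_image.mpr ⟨i, Finset.mem_univ i, rfl⟩)
    linarith
  set S : Fin n → Finset (Fin n) := fun i => Finset.univ.filter (fun j => j ∉ C ∧ j ≤ i)
    with hSdef
  set g : Fin n → ℝ := fun i => if h : (S i).Nonempty then f ((S i).max' h) else M with hgdef
  have hSmono : ∀ {i i' : Fin n}, i ≤ i' → S i ⊆ S i' := by
    intro i i' hii j hj
    simp only [hSdef, Finset.mem_filter] at hj ⊢
    exact ⟨hj.1, hj.2.1, le_trans hj.2.2 hii⟩
  have hgU : ∀ i, i ∉ C → g i = f i := by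
    intro i hi
    have hiS : i ∈ S i := by simp [hSdef, hi]
    have hne : (S i).Nonempty := ⟨i, hiS⟩
    have h1 : (S i).max' hne ≤ i := Finset.max'_le _ _ _ (by
      intro j hj; simp only [hSdef, Finset.mem_filter] at hj; exact hj.2.2)
    have h2 : i ≤ (S i).max' hne := Finset.le_max' _ _ hiS
    have : (S i).max' hne = i := le_antisymm h1 h2
    simp [hgdef, hne, this]
  have hgltM : ∀ i (h : (S i).Nonempty), g i < M := by
    intro i h
    simp only [hgdef, dif_pos h]
    exact hMgt _
  -- g has no increasing k-subsequence
  have hg : ¬ ∃ s : Fin k → Fin n, StrictMono s ∧ StrictMono (g ∘ s) := by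
    rintro ⟨s, hs, hgs⟩
    by_cases hA : ∀ a, (S (s a)).Nonempty
    · set j : Fin k → Fin n := fun a => (S (s a)).max' (hA a) with hjdef
      have hjmem : ∀ a, j a ∈ S (s a) := fun a => Finset.max'_mem _ _
      have hjC : ∀ a, j a ∉ C := by
        intro a
        have := hjmem a
        simp only [hSdef, Finset.mem_filter] at this
        exact this.2.1
      have hgval : ∀ a, g (s a) = f (j a) := by
        intro a; simp [hgdef, hA a, hjdef]
      have hjmono : Monotone j := by
        intro a b hab
        exact Finset.le_max' _ _ (hSmono (hs.monotone hab) (hjmem a))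
      have hjstrict : StrictMono j := by
        intro a b hab
        have h1 : j a ≤ j b := hjmono hab.le
        have h2 : f (j a) < f (j b) := by
          have := hgs hab
          simpa [Function.comp, hgval] using this
        rcases lt_or_eq_of_le h1 with h | h
        · exact h
        · rw [h] at h2; exact absurd h2 (lt_irrefl _)
      have hjfstrict : StrictMono (f ∘ j) := by
        intro a b hab
        have := hgs hab
        simpa [Function.comp, hgval] using this
      obtain ⟨a, ha⟩ := hnoext j hjstrict hjfstrict
      exact hjC a ha
    · push_neg at hA
      obtain ⟨a, ha⟩ := hA
      have hgaM : g (s a) = M := by simp [hgdef, ha]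
      rcases lt_trichotomy a ⟨0, by omega⟩ with h | h | h
      · exact absurd h (by simp [Fin.lt_def])
      · -- a = 0, take b = 1 > a
        have hb : a < (⟨1, by omega⟩ : Fin k) := by
          rw [h]; simp [Fin.lt_def]
        have hlt := hgs hb
        try simp only [Function.comp_apply] at hlt
        rw [hgaM] at hlt
        by_cases hb' : (S (s ⟨1, by omega⟩)).Nonempty
        · have := hgltM (s ⟨1, by omega⟩) hb'
          try simp only [Function.comp_apply] at hlt
          linarith
        · have hg1 : g (s ⟨1, by omega⟩) = M := by simp [hgdef, hb']
          try simp only [Function.comp_apply] at hlt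
          rw [hg1] at hlt
          exact absurd hlt (lt_irrefl _)
      · -- 0 < a, take b = 0 < a
        have hb : (⟨0, by omega⟩ : Fin k) < a := h
        have hS0 : S (s ⟨0, by omega⟩) ⊆ S (s a) := hSmono (hs hb).le
        have hS0e : ¬ (S (s ⟨0, by omega⟩)).Nonempty :=
          fun ⟨x, hx⟩ => by have hx' := hS0 hx; rw [ha] at hx'; simp at hx'
        have hg0 : g (s ⟨0, by omega⟩) = M := by simp [hgdef, hS0e]
        have hlt := hgs hb
        try simp only [Function.comp_apply] at hlt
        rw [hg0, hgaM] at hlt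
        exact absurd hlt (lt_irrefl _)
  -- apply hfar
  have hbound := hfar g hg
  have hdiffsub : (Finset.univ.filter (fun i => f i ≠ g i)) ⊆ C := by
    intro i hi
    simp only [Finset.mem_filter] at hi
    by_contra hiC
    exact hi.2 (hgU i hiC).symm
  have hCcard : C.card ≤ T.card * k := by
    calc C.card ≤ ∑ s ∈ T, (Finset.image s Finset.univ).card := Finset.card_biUnion_le
    _ ≤ ∑ s ∈ T, k := by
        refine Finset.sum_le_sum ?_
        intro s hs
        calc (Finset.image s Finset.univ).card ≤ (Finset.univ : Finset (Fin k)).card :=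
          Finset.card_image_le
        _ = k := by simp
    _ = T.card * k := by rw [Finset.sum_const, smul_eq_mul]
  refine ⟨T, hTP.1, hTP.2, ?_⟩
  rw [div_le_iff₀ hkR]
  calc ε * n ≤ ((Finset.univ.filter (fun i => f i ≠ g i)).card : ℝ) := hbound
  _ ≤ (C.card : ℝ) := by exact_mod_cast Finset.card_le_card hdiffsub
  _ ≤ (T.card : ℝ) * k := by exact_mod_cast hCcard
end

section
/- A function f : Fin n → ℝ contains no increasing subsequence of length k (for k ≥ 2) if and only if the index set Fin n can be partitioned into at most k−1 sets, on each of which f is non-increasing (i.e., i < j in the same part implies f(i) ≥ f(j)). -/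
noncomputable def gfun (n : ℕ) (f : Fin n → ℝ) : Fin n → ℕ := fun j =>
  (((Finset.univ.filter (fun i : Fin n => i < j ∧ f i < f j)).attach).sup
    (fun i => gfun n f i.1 + 1))
termination_by j => j.1
decreasing_by
  have h := i.2
  simp only [Finset.mem_filter, Finset.mem_univ, true_and] at h
  exact h.1

lemma gfun_lt {n : ℕ} {f : Fin n → ℝ} {i j : Fin n} (hij : i < j) (hf : f i < f j) :
    gfun n f i < gfun n f j := by
  conv_rhs => rw [gfun]
  have hmem : i ∈ Finset.univ.filter (fun i : Fin n => i < j ∧ f i < f j) := by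
    simp [hij, hf]
  have := Finset.le_sup (f := fun i' : {x // x ∈ Finset.univ.filter (fun i : Fin n => i < j ∧ f i < f j)} => gfun n f i'.1 + 1)
    (Finset.mem_attach _ ⟨i, hmem⟩)
  exact Nat.lt_of_lt_of_le (Nat.lt_succ_self _) this

lemma snoc_chain {n m : ℕ} {f : Fin n → ℝ} {s : Fin (m+1) → Fin n} {i j : Fin n}
    (hs : StrictMono s) (hfs : StrictMono (f ∘ s)) (hlast : s (Fin.last m) = i)
    (hij : i < j) (hf : f i < f j) :
    ∃ s' : Fin (m+1+1) → Fin n, StrictMono s' ∧ StrictMono (f ∘ s') ∧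
      s' (Fin.last (m+1)) = j := by
  refine ⟨fun t => if h : t.1 < m + 1 then s ⟨t.1, h⟩ else j, ?_, ?_, ?_⟩
  · intro a b hab
    have hb : b.1 ≤ m + 1 := by omega
    have ha : a.1 < m + 1 := by
      have := (Fin.lt_iff_val_lt_val).1 hab; omega
    by_cases hb' : b.1 < m + 1
    · simp only [dif_pos ha, dif_pos hb']
      exact hs hab
    · simp only [dif_pos ha, dif_neg hb']
      calc s ⟨a.1, ha⟩ ≤ s (Fin.last m) := hs.monotone (Fin.le_last _)
        _ = i := hlast
        _ < j := hij
  · intro a b hab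
    have ha : a.1 < m + 1 := by
      have := (Fin.lt_iff_val_lt_val).1 hab; omega
    by_cases hb' : b.1 < m + 1
    · simp only [Function.comp, dif_pos ha, dif_pos hb']
      exact hfs (a := ⟨a.1, ha⟩) (b := ⟨b.1, hb'⟩) hab
    · simp only [Function.comp, dif_pos ha, dif_neg hb']
      calc f (s ⟨a.1, ha⟩) ≤ f (s (Fin.last m)) :=
            hfs.monotone (a := ⟨a.1, ha⟩) (b := Fin.last m) (Fin.le_last _)
        _ = f i := by rw [hlast]
        _ < f j := hf
  · simp

lemma gfun_chain {n : ℕ} (f : Fin n → ℝ) (j : Fin n) :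
    ∃ s : Fin (gfun n f j + 1) → Fin n, StrictMono s ∧ StrictMono (f ∘ s) ∧
      s (Fin.last _) = j := by
  have H : ∀ m : ℕ, ∀ j : Fin n, j.1 < m →
      ∃ s : Fin (gfun n f j + 1) → Fin n, StrictMono s ∧ StrictMono (f ∘ s) ∧
        s (Fin.last _) = j := by
    intro m
    induction m with
    | zero => intro j h; omega
    | succ m ih =>
      intro j hj
      by_cases hne : (Finset.univ.filter (fun i : Fin n => i < j ∧ f i < f j)).Nonempty
      · obtain ⟨i, hi, hsup⟩ := Finset.exists_mem_eq_sup
          ((Finset.univ.filter (fun i : Fin n => i < j ∧ f i < f j)).attach)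
          (hne.attach)
          (fun i' => gfun n f i'.1 + 1)
        have hij : i.1 < j ∧ f i.1 < f j := by
          have := i.2
          simpa only [Finset.mem_filter, Finset.mem_univ, true_and] using this
        have heq : gfun n f j = gfun n f i.1 + 1 := by
          rw [gfun]; exact hsup
        obtain ⟨s, hs, hfs, hlast⟩ := ih i.1 (by
          have : i.1.1 < j.1 := hij.1
          omega)
        rw [heq]
        exact snoc_chain hs hfs hlast hij.1 hij.2
      · have heq : gfun n f j = 0 := by
          rw [gfun]
          rw [Finset.not_nonempty_iff_eq_empty] at hne
          simp [hne]
        rw [heq]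
        refine ⟨fun _ => j, ?_, ?_, rfl⟩
        · intro a b hab
          exact absurd hab (by omega)
        · intro a b hab
          exact absurd hab (by omega)
  exact H (j.1 + 1) j (by omega)

theorem stmt_4 (n k : ℕ) (hk : 2 ≤ k) (f : Fin n → ℝ) :
    (¬ ∃ s : Fin k → Fin n, StrictMono s ∧ StrictMono (f ∘ s)) ↔
    ∃ P : Fin n → Fin (k - 1),
      ∀ i j : Fin n, i < j → P i = P j → f j ≤ f i := by
  constructor
  · intro h
    have hbound : ∀ j : Fin n, gfun n f j < k - 1 := by
      intro j
      by_contra hge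
      push_neg at hge
      obtain ⟨s, hs, hfs, -⟩ := gfun_chain f j
      have hk' : k ≤ gfun n f j + 1 := by omega
      exact h ⟨s ∘ Fin.castLE hk', hs.comp (Fin.strictMono_castLE hk'),
        hfs.comp (Fin.strictMono_castLE hk')⟩
    refine ⟨fun j => ⟨gfun n f j, hbound j⟩, ?_⟩
    intro i j hij hP
    by_contra hfij
    push_neg at hfij
    have := gfun_lt hij hfij
    have : gfun n f i = gfun n f j := congrArg Fin.val hP
    omega
  · rintro ⟨P, hP⟩ ⟨s, hs, hfs⟩
    have hcard : Fintype.card (Fin (k - 1)) < Fintype.card (Fin k) := by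
      simp; omega
    obtain ⟨a, b, hab, heq⟩ := Fintype.exists_ne_map_eq_of_card_lt (fun t => P (s t)) hcard
    rcases lt_or_gt_of_ne hab with h | h
    · have h1 := hfs h
      have h2 := hP (s a) (s b) (hs h) heq
      simp only [Function.comp] at h1
      linarith
    · have h1 := hfs h
      have h2 := hP (s b) (s a) (hs h) heq.symm
      simp only [Function.comp] at h1
      linarith
end

section
/- Suppose x < y are indices of f : Fin n → ℝ with f(x) < f(y), and J₁, …, J_{k−2} are pairwise disjoint intervals appearing in this order inside (x, y). For each i ∈ [k−2], suppose that J_i either contains an increasing subsequence of length i+1 all of whose values are < f(y) (call J_i 'type 1') or contains an increasing subsequence of length k−i all of whose values are ≥ f(y) ('type 2'). Then f contains an increasing subsequence of length k. Specifically: if J₁ is type 2, prepend x to its length-(k−1) sequence; if J_{k−2} is type 1, append y to its length-(k−1) sequence; otherwise there exists i ∈ [k−3] with J_i type 1 and J_{i+1} type 2, and concatenating the length-(i+1) sequence in J_i (values < f(y)) with the length-(k−i−1) sequence in J_{i+1} (values ≥ f(y)) yields an increasing subsequence of length k. -/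
lemma append_sm {α : Type*} [Preorder α] {a b : ℕ} {g : Fin a → α} {h : Fin b → α}
    (hg : StrictMono g) (hh : StrictMono h) (hgh : ∀ p q, g p < h q) :
    StrictMono (Fin.append g h) := by
  intro i j hij
  induction i using Fin.addCases with
  | left p =>
    induction j using Fin.addCases with
    | left q =>
      rw [Fin.append_left, Fin.append_left]
      exact hg (by simp only [Fin.lt_def, Fin.coe_castAdd] at hij ⊢; exact hij)
    | right q =>
      rw [Fin.append_left, Fin.append_right]
      exact hgh _ _
  | right p =>
    induction j using Fin.addCases with
    | left q =>
      exact absurd hij (by simp only [Fin.lt_def, Fin.coe_castAdd, Fin.coe_natAdd]; omega)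
    | right q =>
      rw [Fin.append_right, Fin.append_right]
      exact hh (by simp only [Fin.lt_def, Fin.coe_natAdd] at hij ⊢; omega)

lemma comp_append' {α β : Type*} {a b : ℕ} (f : α → β) (g : Fin a → α) (h : Fin b → α) :
    f ∘ Fin.append g h = Fin.append (f ∘ g) (f ∘ h) := by
  funext i
  induction i using Fin.addCases with
  | left p => simp only [Function.comp_apply, Fin.append_left]
  | right p => simp only [Function.comp_apply, Fin.append_right]

lemma append_pair {n : ℕ} (f : Fin n → ℝ) {a b : ℕ} {g : Fin a → Fin n} {h : Fin b → Fin n}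
    (hg : StrictMono g) (hh : StrictMono h)
    (hgf : StrictMono (f ∘ g)) (hhf : StrictMono (f ∘ h))
    (hlt : ∀ p q, g p < h q) (hflt : ∀ p q, f (g p) < f (h q)) {k : ℕ} (e : k = a + b) :
    ∃ u : Fin k → Fin n, StrictMono u ∧ StrictMono (f ∘ u) := by
  refine ⟨Fin.append g h ∘ Fin.cast e, ?_, ?_⟩
  · exact (append_sm hg hh hlt).comp (fun _ _ hab => hab)
  · have he : f ∘ (Fin.append g h ∘ Fin.cast e) = Fin.append (f ∘ g) (f ∘ h) ∘ Fin.cast e := by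
      rw [← Function.comp_assoc, comp_append']
    rw [he]
    exact (append_sm hgf hhf hflt).comp (fun _ _ hab => hab)

lemma sm1 {α : Type*} [Preorder α] (g : Fin 1 → α) : StrictMono g := by
  intro a b hab
  rw [Fin.lt_def] at hab
  omega

theorem stmt_6 (n k : ℕ) (hk : 3 ≤ k) (f : Fin n → ℝ)
    (x y : Fin n) (hxy : x < y) (hfxy : f x < f y)
    (J : Fin (k - 2) → Finset (Fin n))
    (hJint : ∀ i, ∃ a b : Fin n, J i = Finset.Icc a b)
    (hbetween : ∀ i, ∀ a ∈ J i, x < a ∧ a < y)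
    (horder : ∀ i i' : Fin (k - 2), i < i' → ∀ a ∈ J i, ∀ b ∈ J i', a < b)
    (htype : ∀ i : Fin (k - 2),
      (∃ s : Fin (i.val + 2) → Fin n, StrictMono s ∧ StrictMono (f ∘ s) ∧
        (∀ a, s a ∈ J i) ∧ ∀ a, f (s a) < f y) ∨
      (∃ s : Fin (k - i.val - 1) → Fin n, StrictMono s ∧ StrictMono (f ∘ s) ∧
        (∀ a, s a ∈ J i) ∧ ∀ a, f y ≤ f (s a))) :
    ∃ u : Fin k → Fin n, StrictMono u ∧ StrictMono (f ∘ u) := by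
  classical
  have hk2 : 0 < k - 2 := by omega
  set Left : Fin (k - 2) → Prop := fun i =>
    ∃ s : Fin (i.val + 2) → Fin n, StrictMono s ∧ StrictMono (f ∘ s) ∧
      (∀ a, s a ∈ J i) ∧ ∀ a, f (s a) < f y with hLdef
  have L : Fin (k - 2) := ⟨k - 3, by omega⟩
  by_cases hL : Left ⟨k - 3, by omega⟩
  · -- append y to the length-(k-1) sequence in the last interval
    obtain ⟨s, hs1, hs2, hs3, hs4⟩ := hL
    exact append_pair f hs1 (sm1 _) hs2 (sm1 (f ∘ fun _ : Fin 1 => y))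
      (fun p q => (hbetween _ _ (hs3 p)).2) (fun p q => hs4 p) (by simp; omega)
  · by_cases h0 : ∃ s : Fin (k - (0:ℕ) - 1) → Fin n, StrictMono s ∧ StrictMono (f ∘ s) ∧
        (∀ a, s a ∈ J ⟨0, hk2⟩) ∧ ∀ a, f y ≤ f (s a)
    · -- prepend x
      obtain ⟨s, hs1, hs2, hs3, hs4⟩ := h0
      exact append_pair f (sm1 (fun _ : Fin 1 => x)) hs1 (sm1 (f ∘ fun _ : Fin 1 => x)) hs2
        (fun p q => (hbetween _ _ (hs3 q)).1) (fun p q => lt_of_lt_of_le hfxy (hs4 q))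
        (by omega)
    · have left0 : Left ⟨0, hk2⟩ := by
        rcases htype ⟨0, hk2⟩ with h | h
        · exact h
        · exact absurd h h0
      have key : ∃ m : ℕ, ∃ hm : m + 1 < k - 2, Left ⟨m, by omega⟩ ∧ ¬ Left ⟨m + 1, hm⟩ := by
        by_contra hc
        push_neg at hc
        have all : ∀ m (hm : m < k - 2), Left ⟨m, hm⟩ := by
          intro m
          induction m with
          | zero => intro _; exact left0
          | succ p ih =>
            intro hm
            exact hc p hm (ih (by omega))
        exact hL (all (k - 3) (by omega))
      obtain ⟨m, hm, hLm, hLm1⟩ := key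
      obtain ⟨s, hs1, hs2, hs3, hs4⟩ := hLm
      have hR : ∃ s : Fin (k - (m + 1) - 1) → Fin n, StrictMono s ∧ StrictMono (f ∘ s) ∧
          (∀ a, s a ∈ J ⟨m + 1, hm⟩) ∧ ∀ a, f y ≤ f (s a) := by
        rcases htype ⟨m + 1, hm⟩ with h | h
        · exact absurd h hLm1
        · exact h
      obtain ⟨t, ht1, ht2, ht3, ht4⟩ := hR
      exact append_pair f hs1 ht1 hs2 ht2
        (fun p q => horder ⟨m, by omega⟩ ⟨m + 1, hm⟩ (by simp [Fin.lt_def]) _ (hs3 p) _ (ht3 q))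
        (fun p q => lt_of_lt_of_le (hs4 p) (ht4 q)) (by simp; omega)
end
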